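/- The function f(m) := 2E(m)/(m·K(m)) + 1 − 2/m is a strictly decreasing bijection from (0,1) onto (−1, 0); in particular f(m) → 0 as m → 0⁺ and f(m) → −1 as m → 1⁻. -/

import Mathlib

open Real Filter MeasureTheory intervalIntegral Set

noncomputable def ellK (m : ℝ) : ℝ :=
  ∫ θ in (0:ℝ)..(π / 2), 1 / Real.sqrt (1 - m * Real.sin θ ^ 2)

noncomputable def ellE (m : ℝ) : ℝ :=
  ∫ θ in (0:ℝ)..(π / 2), Real.sqrt (1 - m * Real.sin θ ^ 2)

noncomputable def ellG (m : ℝ) : ℝ :=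
  ∫ θ in (0:ℝ)..(π / 2), Real.sin θ ^ 2 / Real.sqrt (1 - m * Real.sin θ ^ 2)

lemma A_ge {m : ℝ} (hm0 : 0 ≤ m) (θ : ℝ) : 1 - m ≤ 1 - m * Real.sin θ ^ 2 := by
  nlinarith [Real.sin_sq_le_one θ, sq_nonneg (Real.sin θ)]

lemma A_pos {m : ℝ} (hm0 : 0 ≤ m) (hm1 : m < 1) (θ : ℝ) : 0 < 1 - m * Real.sin θ ^ 2 := by
  have := A_ge hm0 θ; linarith

lemma cont_div {m : ℝ} (hm0 : 0 ≤ m) (hm1 : m < 1) {w : ℝ → ℝ} (hw : Continuous w) :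
    Continuous fun θ => w θ / Real.sqrt (1 - m * Real.sin θ ^ 2) := by
  apply hw.div
  · exact Real.continuous_sqrt.comp (by continuity)
  · intro θ; exact (Real.sqrt_pos.2 (A_pos hm0 hm1 θ)).ne'

lemma intble {m : ℝ} (hm0 : 0 ≤ m) (hm1 : m < 1) {w : ℝ → ℝ} (hw : Continuous w) :
    IntervalIntegrable (fun θ => w θ / Real.sqrt (1 - m * Real.sin θ ^ 2)) volume 0 (π/2) :=
  (cont_div hm0 hm1 hw).intervalIntegrable 0 (π/2)

noncomputable def ellH (m : ℝ) : ℝ :=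
  ∫ θ in (0:ℝ)..(π / 2), Real.cos θ ^ 2 / Real.sqrt (1 - m * Real.sin θ ^ 2)

lemma ellK_eq {m : ℝ} (hm0 : 0 ≤ m) (hm1 : m < 1) :
    ellK m = ellG m + ellH m := by
  rw [ellK, ellG, ellH, ← integral_add (intble hm0 hm1 (by continuity)) (intble hm0 hm1 (by continuity))]
  congr 1; funext θ
  rw [← add_div, Real.sin_sq_add_cos_sq]

lemma ellE_eq {m : ℝ} (hm0 : 0 ≤ m) (hm1 : m < 1) :
    ellE m = ellK m - m * ellG m := by
  have h1 : m * ellG m = ∫ θ in (0:ℝ)..(π / 2),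
      m * (Real.sin θ ^ 2 / Real.sqrt (1 - m * Real.sin θ ^ 2)) := by
    rw [ellG, intervalIntegral.integral_const_mul]
  rw [ellK, h1, ← integral_sub (intble hm0 hm1 continuous_const)
    ((intble hm0 hm1 (by continuity)).const_mul m)]
  rw [ellE]; congr 1; funext θ
  have key : 1 / Real.sqrt (1 - m * Real.sin θ ^ 2)
      - m * (Real.sin θ ^ 2 / Real.sqrt (1 - m * Real.sin θ ^ 2))
      = (1 - m * Real.sin θ ^ 2) / Real.sqrt (1 - m * Real.sin θ ^ 2) := by ring
  rw [key, Real.div_sqrt]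

lemma pi2_pos : (0:ℝ) < π / 2 := by positivity

lemma ellG_pos {m : ℝ} (hm0 : 0 ≤ m) (hm1 : m < 1) : 0 < ellG m := by
  apply intervalIntegral_pos_of_pos_on (intble hm0 hm1 (by continuity)) _ pi2_pos
  intro θ hθ
  have hs : 0 < Real.sin θ := Real.sin_pos_of_pos_of_lt_pi hθ.1 (by linarith [hθ.2, pi_pos])
  exact div_pos (by positivity) (Real.sqrt_pos.2 (A_pos hm0 hm1 θ))

lemma ellH_pos {m : ℝ} (hm0 : 0 ≤ m) (hm1 : m < 1) : 0 < ellH m := by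
  apply intervalIntegral_pos_of_pos_on (intble hm0 hm1 (by continuity)) _ pi2_pos
  intro θ hθ
  have hs : 0 < Real.cos θ := Real.cos_pos_of_mem_Ioo ⟨by linarith [hθ.1, pi_pos], hθ.2⟩
  exact div_pos (by positivity) (Real.sqrt_pos.2 (A_pos hm0 hm1 θ))

lemma ellK_pos {m : ℝ} (hm0 : 0 ≤ m) (hm1 : m < 1) : 0 < ellK m := by
  rw [ellK_eq hm0 hm1]; linarith [ellG_pos hm0 hm1, ellH_pos hm0 hm1]

lemma ellH_le_one {m : ℝ} (hm0 : 0 ≤ m) (hm1 : m < 1) : ellH m ≤ 1 := by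
  have h : ellH m ≤ ∫ θ in (0:ℝ)..(π / 2), Real.cos θ := by
    rw [ellH]
    apply intervalIntegral.integral_mono_on pi2_pos.le (intble hm0 hm1 (by continuity))
      (Real.continuous_cos.intervalIntegrable 0 (π/2))
    intro θ hθ
    have hc : 0 ≤ Real.cos θ := Real.cos_nonneg_of_mem_Icc
      ⟨by linarith [hθ.1, pi_pos], hθ.2⟩
    have hA := A_pos hm0 hm1 θ
    have hsq : Real.cos θ ≤ Real.sqrt (1 - m * Real.sin θ ^ 2) := by
      rw [show Real.cos θ = Real.sqrt (Real.cos θ ^ 2) by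
        rw [Real.sqrt_sq hc]]
      apply Real.sqrt_le_sqrt
      nlinarith [Real.sin_sq_add_cos_sq θ, sq_nonneg (Real.sin θ)]
    rw [div_le_iff₀ (Real.sqrt_pos.2 hA)]
    nlinarith [Real.sqrt_nonneg (1 - m * Real.sin θ ^ 2)]
  rw [integral_cos] at h
  simpa using h

lemma ptwise_bound {b m m' : ℝ} (hb : b < 1) (hm : m ∈ Icc 0 b) (hm' : m' ∈ Icc 0 b)
    {w : ℝ → ℝ} (hw1 : ∀ θ, |w θ| ≤ 1) (θ : ℝ) :
    |w θ / Real.sqrt (1 - m * Real.sin θ ^ 2) - w θ / Real.sqrt (1 - m' * Real.sin θ ^ 2)|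
      ≤ |m - m'| / (2 * (1 - b) * Real.sqrt (1 - b)) := by
  set A := 1 - m * Real.sin θ ^ 2 with hA_def
  set A' := 1 - m' * Real.sin θ ^ 2 with hA'_def
  have hδ : (0:ℝ) < 1 - b := by linarith
  have hAδ : 1 - b ≤ A := le_trans (by linarith [hm.2]) (A_ge hm.1 θ)
  have hA'δ : 1 - b ≤ A' := le_trans (by linarith [hm'.2]) (A_ge hm'.1 θ)
  have hA : 0 < A := lt_of_lt_of_le hδ hAδ
  have hA' : 0 < A' := lt_of_lt_of_le hδ hA'δ
  set u := Real.sqrt A with hu_def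
  set u' := Real.sqrt A' with hu'_def
  have hu : Real.sqrt (1 - b) ≤ u := Real.sqrt_le_sqrt hAδ
  have hu' : Real.sqrt (1 - b) ≤ u' := Real.sqrt_le_sqrt hA'δ
  have hδs : 0 < Real.sqrt (1 - b) := Real.sqrt_pos.2 hδ
  have hu0 : 0 < u := lt_of_lt_of_le hδs hu
  have hu'0 : 0 < u' := lt_of_lt_of_le hδs hu'
  have hu2 : u ^ 2 = A := Real.sq_sqrt hA.le
  have hu'2 : u' ^ 2 = A' := Real.sq_sqrt hA'.le
  have hden : 0 < u * (u' * (u + u')) := by positivity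
  have key : 1 / u - 1 / u' = (A' - A) / (u * (u' * (u + u'))) := by
    rw [eq_div_iff hden.ne', ← hu2, ← hu'2]
    field_simp
    ring
  have hAA' : |A' - A| ≤ |m - m'| := by
    have : A' - A = (m - m') * Real.sin θ ^ 2 := by rw [hA_def, hA'_def]; ring
    rw [this, abs_mul]
    have h1 : |Real.sin θ ^ 2| ≤ 1 := by
      rw [abs_of_nonneg (sq_nonneg _)]; exact Real.sin_sq_le_one θ
    nlinarith [abs_nonneg (m - m')]
  have hdenlb : 2 * (1 - b) * Real.sqrt (1 - b) ≤ u * (u' * (u + u')) := by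
    have h1 : (1 - b) ≤ u * u' := by
      calc (1 - b) = Real.sqrt (1 - b) * Real.sqrt (1 - b) := (Real.mul_self_sqrt hδ.le).symm
      _ ≤ u * u' := by apply mul_le_mul hu hu' hδs.le hu0.le
    nlinarith
  have step : |w θ / u - w θ / u'| = |w θ| * |1 / u - 1 / u'| := by
    rw [← abs_mul]; congr 1; ring
  rw [step, key, abs_div, abs_of_pos hden]
  calc |w θ| * (|A' - A| / (u * (u' * (u + u'))))
      ≤ 1 * (|m - m'| / (2 * (1 - b) * Real.sqrt (1 - b))) := by
        apply mul_le_mul (hw1 θ)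
        · exact div_le_div₀ (abs_nonneg _) hAA' (by positivity) hdenlb
        · positivity
        · norm_num
    _ = |m - m'| / (2 * (1 - b) * Real.sqrt (1 - b)) := by ring

lemma pint_lip {b : ℝ} (hb : b < 1) {w : ℝ → ℝ} (hw : Continuous w) (hw1 : ∀ θ, |w θ| ≤ 1)
    {m m' : ℝ} (hm : m ∈ Icc 0 b) (hm' : m' ∈ Icc 0 b) :
    |(∫ θ in (0:ℝ)..(π / 2), w θ / Real.sqrt (1 - m * Real.sin θ ^ 2)) -
      (∫ θ in (0:ℝ)..(π / 2), w θ / Real.sqrt (1 - m' * Real.sin θ ^ 2))|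
      ≤ (π / 2) / (2 * (1 - b) * Real.sqrt (1 - b)) * |m - m'| := by
  have hm1 : m < 1 := lt_of_le_of_lt hm.2 hb
  have hm'1 : m' < 1 := lt_of_le_of_lt hm'.2 hb
  rw [← integral_sub (intble hm.1 hm1 hw) (intble hm'.1 hm'1 hw)]
  have := intervalIntegral.norm_integral_le_of_norm_le_const (a := 0) (b := π/2)
    (C := |m - m'| / (2 * (1 - b) * Real.sqrt (1 - b)))
    (f := fun θ => w θ / Real.sqrt (1 - m * Real.sin θ ^ 2) -
      w θ / Real.sqrt (1 - m' * Real.sin θ ^ 2))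
    (fun θ _ => ptwise_bound hb hm hm' hw1 θ)
  rw [Real.norm_eq_abs] at this
  calc _ ≤ |m - m'| / (2 * (1 - b) * Real.sqrt (1 - b)) * |π / 2 - 0| := this
    _ = (π / 2) / (2 * (1 - b) * Real.sqrt (1 - b)) * |m - m'| := by
        rw [sub_zero, abs_of_pos pi2_pos]; ring

lemma pint_contOn {w : ℝ → ℝ} (hw : Continuous w) (hw1 : ∀ θ, |w θ| ≤ 1) :
    ContinuousOn (fun m => ∫ θ in (0:ℝ)..(π / 2), w θ / Real.sqrt (1 - m * Real.sin θ ^ 2))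
      (Ico 0 1) := by
  intro m₀ hm₀
  set b := (1 + m₀) / 2 with hb_def
  have hb1 : b < 1 := by rw [hb_def]; linarith [hm₀.2]
  have hm₀b : m₀ < b := by rw [hb_def]; linarith [hm₀.2]
  set K := (π / 2) / (2 * (1 - b) * Real.sqrt (1 - b)) with hK_def
  have hK0 : 0 ≤ K := by
    have : (0:ℝ) < 1 - b := by linarith
    positivity
  have lip : LipschitzOnWith (Real.toNNReal K)
      (fun m => ∫ θ in (0:ℝ)..(π / 2), w θ / Real.sqrt (1 - m * Real.sin θ ^ 2))
      (Icc 0 b) := by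
    apply LipschitzOnWith.of_dist_le_mul
    intro x hx y hy
    rw [Real.dist_eq, Real.dist_eq, Real.coe_toNNReal K hK0]
    exact pint_lip hb1 hw hw1 hx hy
  refine ((lip.continuousOn).continuousWithinAt ⟨hm₀.1, hm₀b.le⟩).mono_of_mem_nhdsWithin ?_
  rw [mem_nhdsWithin]
  exact ⟨Iio b, isOpen_Iio, hm₀b, fun x hx => ⟨hx.2.1, hx.1.le⟩⟩

lemma ellG_contOn : ContinuousOn ellG (Ico 0 1) := by
  apply pint_contOn (by continuity)
  intro θ
  rw [abs_of_nonneg (sq_nonneg _)]; exact Real.sin_sq_le_one θ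

lemma ellH_contOn : ContinuousOn ellH (Ico 0 1) := by
  apply pint_contOn (by continuity)
  intro θ
  rw [abs_of_nonneg (sq_nonneg _)]; exact Real.cos_sq_le_one θ

lemma ellK_contOn : ContinuousOn ellK (Ico 0 1) := by
  have : ∀ m ∈ Ico (0:ℝ) 1, ellK m = ellG m + ellH m := fun m hm => ellK_eq hm.1 hm.2
  exact ContinuousOn.congr (ellG_contOn.add ellH_contOn) this

lemma ellG_zero : ellG 0 = π / 4 := by
  have : ellG 0 = ∫ θ in (0:ℝ)..(π / 2), Real.sin θ ^ 2 := by
    rw [ellG]; congr 1; funext θ; simp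
  rw [this, integral_sin_sq]
  simp
  ring

lemma ellH_zero : ellH 0 = π / 4 := by
  have : ellH 0 = ∫ θ in (0:ℝ)..(π / 2), Real.cos θ ^ 2 := by
    rw [ellH]; congr 1; funext θ; simp
  rw [this, integral_cos_sq]
  simp
  ring

noncomputable def Qf (m₁ m₂ θ φ : ℝ) : ℝ :=
  (Real.sin θ ^ 2 - Real.sin φ ^ 2) *
    (1 / Real.sqrt (1 - m₂ * Real.sin θ ^ 2) * (1 / Real.sqrt (1 - m₁ * Real.sin φ ^ 2)) -
     1 / Real.sqrt (1 - m₁ * Real.sin θ ^ 2) * (1 / Real.sqrt (1 - m₂ * Real.sin φ ^ 2)))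

section key

variable {m₁ m₂ : ℝ}

lemma core (h10 : 0 ≤ m₁) (h12 : m₁ < m₂) (h21 : m₂ < 1)
    {x y : ℝ} (hx1 : x ≤ 1) (hy0 : 0 ≤ y) (hyx : y < x) :
    1 / Real.sqrt (1 - m₁ * x) * (1 / Real.sqrt (1 - m₂ * y)) <
      1 / Real.sqrt (1 - m₂ * x) * (1 / Real.sqrt (1 - m₁ * y)) := by
  have hx0 : 0 ≤ x := le_trans hy0 hyx.le
  have hy1 : y ≤ 1 := le_trans hyx.le hx1
  have p1 : 0 < 1 - m₁ * x := by nlinarith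
  have p2 : 0 < 1 - m₂ * x := by nlinarith
  have p3 : 0 < 1 - m₁ * y := by nlinarith
  have p4 : 0 < 1 - m₂ * y := by nlinarith
  rw [div_mul_div_comm, div_mul_div_comm, ← Real.sqrt_mul p1.le, ← Real.sqrt_mul p2.le]
  rw [one_mul] at *
  apply one_div_lt_one_div_of_lt
  · exact Real.sqrt_pos.2 (by positivity)
  · apply Real.sqrt_lt_sqrt (by positivity)
    nlinarith

lemma Q_pos (h10 : 0 ≤ m₁) (h12 : m₁ < m₂) (h21 : m₂ < 1) {θ φ : ℝ}
    (h : Real.sin φ ^ 2 < Real.sin θ ^ 2) : 0 < Qf m₁ m₂ θ φ := by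
  apply mul_pos (by linarith)
  have := core h10 h12 h21 (Real.sin_sq_le_one θ) (sq_nonneg (Real.sin φ)) h
  linarith

lemma Q_nonneg (h10 : 0 ≤ m₁) (h12 : m₁ < m₂) (h21 : m₂ < 1) (θ φ : ℝ) :
    0 ≤ Qf m₁ m₂ θ φ := by
  rcases lt_trichotomy (Real.sin φ ^ 2) (Real.sin θ ^ 2) with h | h | h
  · exact (Q_pos h10 h12 h21 h).le
  · rw [Qf, h, sub_self, zero_mul]
  · have := core h10 h12 h21 (Real.sin_sq_le_one φ) (sq_nonneg (Real.sin θ)) h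
    rw [Qf]
    nlinarith

lemma Q_cont (h10 : 0 ≤ m₁) (h12 : m₁ < m₂) (h21 : m₂ < 1) (θ : ℝ) :
    Continuous fun φ => Qf m₁ m₂ θ φ := by
  have h20 : 0 ≤ m₂ := le_trans h10 h12.le
  have h11 : m₁ < 1 := lt_trans h12 h21
  have c1 := cont_div h10 h11 (continuous_const (y := (1:ℝ)))
  have c2 := cont_div h20 h21 (continuous_const (y := (1:ℝ)))
  unfold Qf
  fun_prop (disch := first | exact fun θ => (Real.sqrt_pos.2 (A_pos h10 h11 θ)).ne' |
    exact fun θ => (Real.sqrt_pos.2 (A_pos h20 h21 θ)).ne')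

end key

section key2

variable {m₁ m₂ : ℝ}

lemma J_eq (h10 : 0 ≤ m₁) (h12 : m₁ < m₂) (h21 : m₂ < 1) (θ : ℝ) :
    (∫ φ in (0:ℝ)..(π / 2), Qf m₁ m₂ θ φ) =
      Real.sin θ ^ 2 / Real.sqrt (1 - m₂ * Real.sin θ ^ 2) * ellK m₁
      - Real.sin θ ^ 2 / Real.sqrt (1 - m₁ * Real.sin θ ^ 2) * ellK m₂
      - 1 / Real.sqrt (1 - m₂ * Real.sin θ ^ 2) * ellG m₁
      + 1 / Real.sqrt (1 - m₁ * Real.sin θ ^ 2) * ellG m₂ := by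
  have h20 : 0 ≤ m₂ := le_trans h10 h12.le
  have h11 : m₁ < 1 := lt_trans h12 h21
  have i1 : IntervalIntegrable (fun φ => 1 / Real.sqrt (1 - m₁ * Real.sin φ ^ 2)) volume 0 (π/2) :=
    intble h10 h11 continuous_const
  have i2 : IntervalIntegrable (fun φ => 1 / Real.sqrt (1 - m₂ * Real.sin φ ^ 2)) volume 0 (π/2) :=
    intble h20 h21 continuous_const
  have i3 : IntervalIntegrable (fun φ => Real.sin φ ^ 2 / Real.sqrt (1 - m₁ * Real.sin φ ^ 2))
      volume 0 (π/2) := intble h10 h11 (by continuity)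
  have i4 : IntervalIntegrable (fun φ => Real.sin φ ^ 2 / Real.sqrt (1 - m₂ * Real.sin φ ^ 2))
      volume 0 (π/2) := intble h20 h21 (by continuity)
  have expand : (fun φ => Qf m₁ m₂ θ φ) = fun φ =>
      ((Real.sin θ ^ 2 / Real.sqrt (1 - m₂ * Real.sin θ ^ 2)) *
        (1 / Real.sqrt (1 - m₁ * Real.sin φ ^ 2))
      - (Real.sin θ ^ 2 / Real.sqrt (1 - m₁ * Real.sin θ ^ 2)) *
        (1 / Real.sqrt (1 - m₂ * Real.sin φ ^ 2))
      - (1 / Real.sqrt (1 - m₂ * Real.sin θ ^ 2)) *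
        (Real.sin φ ^ 2 / Real.sqrt (1 - m₁ * Real.sin φ ^ 2)))
      + (1 / Real.sqrt (1 - m₁ * Real.sin θ ^ 2)) *
        (Real.sin φ ^ 2 / Real.sqrt (1 - m₂ * Real.sin φ ^ 2)) := by
    funext φ; rw [Qf]; ring
  rw [expand, intervalIntegral.integral_add (((i1.const_mul _).sub (i2.const_mul _)).sub
    (i3.const_mul _)) (i4.const_mul _),
    intervalIntegral.integral_sub ((i1.const_mul _).sub (i2.const_mul _)) (i3.const_mul _),
    intervalIntegral.integral_sub (i1.const_mul _) (i2.const_mul _),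
    intervalIntegral.integral_const_mul, intervalIntegral.integral_const_mul,
    intervalIntegral.integral_const_mul, intervalIntegral.integral_const_mul]
  rw [ellK, ellK, ellG, ellG]

lemma J_pos (h10 : 0 ≤ m₁) (h12 : m₁ < m₂) (h21 : m₂ < 1) {θ : ℝ}
    (hθ : θ ∈ Ioo 0 (π / 2)) : 0 < ∫ φ in (0:ℝ)..(π / 2), Qf m₁ m₂ θ φ := by
  have hcont := Q_cont h10 h12 h21 θ
  have split : (∫ φ in (0:ℝ)..θ, Qf m₁ m₂ θ φ) + (∫ φ in θ..(π / 2), Qf m₁ m₂ θ φ)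
      = ∫ φ in (0:ℝ)..(π / 2), Qf m₁ m₂ θ φ :=
    intervalIntegral.integral_add_adjacent_intervals (hcont.intervalIntegrable _ _)
      (hcont.intervalIntegrable _ _)
  rw [← split]
  have pos1 : 0 < ∫ φ in (0:ℝ)..θ, Qf m₁ m₂ θ φ := by
    apply intervalIntegral_pos_of_pos_on (hcont.intervalIntegrable _ _) _ hθ.1
    intro φ hφ
    apply Q_pos h10 h12 h21
    have hs0 : 0 ≤ Real.sin φ := Real.sin_nonneg_of_nonneg_of_le_pi hφ.1.le
      (by linarith [hφ.2, hθ.2, pi_pos])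
    have : Real.sin φ < Real.sin θ := Real.sin_lt_sin_of_lt_of_le_pi_div_two
      (by linarith [hφ.1, pi_pos]) hθ.2.le hφ.2
    nlinarith
  have pos2 : 0 ≤ ∫ φ in θ..(π / 2), Qf m₁ m₂ θ φ :=
    intervalIntegral.integral_nonneg hθ.2.le (fun φ _ => Q_nonneg h10 h12 h21 θ φ)
  linarith

lemma key_ineq (h10 : 0 < m₁) (h12 : m₁ < m₂) (h21 : m₂ < 1) :
    ellG m₁ * ellK m₂ < ellG m₂ * ellK m₁ := by
  have h20 : 0 ≤ m₂ := le_trans h10.le h12.le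
  have h11 : m₁ < 1 := lt_trans h12 h21
  have hJcont : Continuous fun θ => (∫ φ in (0:ℝ)..(π / 2), Qf m₁ m₂ θ φ) := by
    rw [show (fun θ => (∫ φ in (0:ℝ)..(π / 2), Qf m₁ m₂ θ φ)) = fun θ =>
      Real.sin θ ^ 2 / Real.sqrt (1 - m₂ * Real.sin θ ^ 2) * ellK m₁
      - Real.sin θ ^ 2 / Real.sqrt (1 - m₁ * Real.sin θ ^ 2) * ellK m₂
      - 1 / Real.sqrt (1 - m₂ * Real.sin θ ^ 2) * ellG m₁
      + 1 / Real.sqrt (1 - m₁ * Real.sin θ ^ 2) * ellG m₂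
      from funext (J_eq h10.le h12 h21)]
    exact ((((cont_div h20 h21 (by continuity)).mul continuous_const).sub
      ((cont_div h10.le h11 (by continuity)).mul continuous_const)).sub
      ((cont_div h20 h21 continuous_const).mul continuous_const)).add
      ((cont_div h10.le h11 continuous_const).mul continuous_const)
  have hpos : 0 < ∫ θ in (0:ℝ)..(π / 2), (∫ φ in (0:ℝ)..(π / 2), Qf m₁ m₂ θ φ) :=
    intervalIntegral_pos_of_pos_on (hJcont.intervalIntegrable _ _)
      (fun θ hθ => J_pos h10.le h12 h21 hθ) pi2_pos
  have hval : (∫ θ in (0:ℝ)..(π / 2), (∫ φ in (0:ℝ)..(π / 2), Qf m₁ m₂ θ φ))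
      = 2 * (ellG m₂ * ellK m₁ - ellG m₁ * ellK m₂) := by
    rw [intervalIntegral.integral_congr (g := fun θ =>
      Real.sin θ ^ 2 / Real.sqrt (1 - m₂ * Real.sin θ ^ 2) * ellK m₁
      - Real.sin θ ^ 2 / Real.sqrt (1 - m₁ * Real.sin θ ^ 2) * ellK m₂
      - 1 / Real.sqrt (1 - m₂ * Real.sin θ ^ 2) * ellG m₁
      + 1 / Real.sqrt (1 - m₁ * Real.sin θ ^ 2) * ellG m₂)
      (fun θ _ => J_eq h10.le h12 h21 θ)]
    have i1 : IntervalIntegrable (fun θ => 1 / Real.sqrt (1 - m₁ * Real.sin θ ^ 2)) volume 0 (π/2) :=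
      intble h10.le h11 continuous_const
    have i2 : IntervalIntegrable (fun θ => 1 / Real.sqrt (1 - m₂ * Real.sin θ ^ 2)) volume 0 (π/2) :=
      intble h20 h21 continuous_const
    have i3 : IntervalIntegrable (fun θ => Real.sin θ ^ 2 / Real.sqrt (1 - m₁ * Real.sin θ ^ 2))
        volume 0 (π/2) := intble h10.le h11 (by continuity)
    have i4 : IntervalIntegrable (fun θ => Real.sin θ ^ 2 / Real.sqrt (1 - m₂ * Real.sin θ ^ 2))
        volume 0 (π/2) := intble h20 h21 (by continuity)
    rw [intervalIntegral.integral_add (((i4.mul_const _).sub (i3.mul_const _)).sub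
      (i2.mul_const _)) (i1.mul_const _),
      intervalIntegral.integral_sub ((i4.mul_const _).sub (i3.mul_const _)) (i2.mul_const _),
      intervalIntegral.integral_sub (i4.mul_const _) (i3.mul_const _),
      intervalIntegral.integral_mul_const, intervalIntegral.integral_mul_const,
      intervalIntegral.integral_mul_const, intervalIntegral.integral_mul_const]
    rw [← ellK, ← ellK, ← ellG, ← ellG]
    ring
  rw [hval] at hpos
  linarith

end key2

lemma K_lb {m : ℝ} (hm : m ∈ Ioo (0:ℝ) 1) :
    (1 / Real.sqrt 2) * (Real.log (π / 2) - Real.log (Real.sqrt (1 - m))) ≤ ellK m := by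
  obtain ⟨hm0, hm1⟩ := hm
  set ε := 1 - m with hε_def
  have hε0 : 0 < ε := by linarith
  have hε1 : ε < 1 := by linarith
  have hsε : 0 < Real.sqrt ε := Real.sqrt_pos.2 hε0
  have hsε1 : Real.sqrt ε < 1 := by
    rw [show (1:ℝ) = Real.sqrt 1 by simp]; exact Real.sqrt_lt_sqrt hε0.le hε1
  have hsεπ : Real.sqrt ε < π / 2 := lt_trans hsε1 (by linarith [pi_gt_three])
  -- step 1 : pointwise lower bound
  have step1 : (∫ θ in (0:ℝ)..(π / 2), 1 / Real.sqrt (ε + (π / 2 - θ) ^ 2)) ≤ ellK m := by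
    rw [ellK]
    apply intervalIntegral.integral_mono_on pi2_pos.le
    · apply Continuous.intervalIntegrable
      apply continuous_const.div
      · apply Real.continuous_sqrt.comp; continuity
      · intro θ; refine (Real.sqrt_pos.2 ?_).ne'; positivity
    · exact intble hm0.le hm1 continuous_const
    · intro θ hθ
      have hc0 : 0 ≤ Real.cos θ := Real.cos_nonneg_of_mem_Icc
        ⟨by linarith [hθ.1, pi_pos], hθ.2⟩
      have hcle : Real.cos θ ≤ π / 2 - θ := by
        rw [← Real.sin_pi_div_two_sub]
        exact Real.sin_le (by linarith [hθ.2])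
      have h1 : 1 - m * Real.sin θ ^ 2 ≤ ε + (π / 2 - θ) ^ 2 := by
        have : 1 - m * Real.sin θ ^ 2 = ε + m * Real.cos θ ^ 2 := by
          rw [hε_def]; nlinarith [Real.sin_sq_add_cos_sq θ]
        rw [this]
        nlinarith [sq_nonneg (Real.cos θ)]
      have h2 : 0 < 1 - m * Real.sin θ ^ 2 := A_pos hm0.le hm1 θ
      apply div_le_div_of_nonneg_left (by norm_num) (Real.sqrt_pos.2 h2)
      exact Real.sqrt_le_sqrt h1
  -- step 2 : substitution
  have step2 : (∫ θ in (0:ℝ)..(π / 2), 1 / Real.sqrt (ε + (π / 2 - θ) ^ 2))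
      = ∫ t in (0:ℝ)..(π / 2), 1 / Real.sqrt (ε + t ^ 2) := by
    have := intervalIntegral.integral_comp_sub_left (a := (0:ℝ)) (b := π / 2)
      (fun t => 1 / Real.sqrt (ε + t ^ 2)) (π / 2)
    simpa using this
  -- step 3 : drop the initial piece
  have icont : ∀ a b : ℝ, IntervalIntegrable (fun t => 1 / Real.sqrt (ε + t ^ 2)) volume a b := by
    intro a b
    apply Continuous.intervalIntegrable
    apply continuous_const.div
    · apply Real.continuous_sqrt.comp; continuity
    · intro t; refine (Real.sqrt_pos.2 ?_).ne'; positivity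
  have step3 : (∫ t in Real.sqrt ε..(π / 2), 1 / Real.sqrt (ε + t ^ 2))
      ≤ ∫ t in (0:ℝ)..(π / 2), 1 / Real.sqrt (ε + t ^ 2) := by
    rw [← intervalIntegral.integral_add_adjacent_intervals (icont 0 (Real.sqrt ε))
      (icont (Real.sqrt ε) (π / 2))]
    have : 0 ≤ ∫ t in (0:ℝ)..Real.sqrt ε, 1 / Real.sqrt (ε + t ^ 2) := by
      apply intervalIntegral.integral_nonneg hsε.le
      intro t _; positivity
    linarith
  -- step 4 : compare with 1/(√2 t)
  have step4 : (1 / Real.sqrt 2) * (Real.log (π / 2) - Real.log (Real.sqrt ε))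
      ≤ ∫ t in Real.sqrt ε..(π / 2), 1 / Real.sqrt (ε + t ^ 2) := by
    have hlog : (∫ t in Real.sqrt ε..(π / 2), (1 / Real.sqrt 2) * (1 / t))
        = (1 / Real.sqrt 2) * (Real.log (π / 2) - Real.log (Real.sqrt ε)) := by
      rw [intervalIntegral.integral_const_mul, integral_one_div]
      · rw [Real.log_div pi2_pos.ne' hsε.ne']
      · intro h
        rw [Set.mem_uIcc] at h
        rcases h with ⟨h1, _⟩ | ⟨_, h2⟩ <;> linarith
    rw [← hlog]
    apply intervalIntegral.integral_mono_on hsεπ.le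
    · apply ContinuousOn.intervalIntegrable
      apply ContinuousOn.mul continuousOn_const
      apply continuousOn_const.div continuousOn_id
      intro t ht
      rw [Set.uIcc_of_le hsεπ.le] at ht
      exact (lt_of_lt_of_le hsε ht.1).ne'
    · exact icont _ _
    · intro t ht
      have ht0 : 0 < t := lt_of_lt_of_le hsε ht.1
      have hεt : ε ≤ t ^ 2 := by
        have := Real.sq_sqrt hε0.le
        nlinarith [ht.1]
      have : Real.sqrt (ε + t ^ 2) ≤ Real.sqrt 2 * t := by
        rw [show Real.sqrt 2 * t = Real.sqrt (2 * t ^ 2) by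
          rw [Real.sqrt_mul (by norm_num), Real.sqrt_sq ht0.le]]
        exact Real.sqrt_le_sqrt (by linarith)
      have hA : 0 < Real.sqrt (ε + t ^ 2) := Real.sqrt_pos.2 (by positivity)
      calc (1 / Real.sqrt 2) * (1 / t) = 1 / (Real.sqrt 2 * t) := by
            rw [div_mul_div_comm, one_mul]
        _ ≤ 1 / Real.sqrt (ε + t ^ 2) := one_div_le_one_div_of_le hA this
  rw [step2] at step1
  linarith

lemma K_atTop : Tendsto ellK (nhdsWithin 1 (Set.Iio 1)) atTop := by
  have hlog : Tendsto (fun m : ℝ => Real.log (Real.sqrt (1 - m)))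
      (nhdsWithin 1 (Set.Iio 1)) atBot := by
    apply Real.tendsto_log_nhdsGT_zero.comp
    apply tendsto_nhdsWithin_of_tendsto_nhds_of_eventually_within
    · have h0 : Tendsto (fun m : ℝ => Real.sqrt (1 - m)) (nhds 1) (nhds 0) := by
        have : Continuous fun m : ℝ => Real.sqrt (1 - m) := by fun_prop
        have := this.tendsto 1
        simpa using this
      exact h0.mono_left nhdsWithin_le_nhds
    · filter_upwards [self_mem_nhdsWithin] with m hm
      exact Real.sqrt_pos.2 (by simp only [Set.mem_Iio] at hm; linarith)
  have hL : Tendsto (fun m : ℝ => (1 / Real.sqrt 2) *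
      (Real.log (π / 2) - Real.log (Real.sqrt (1 - m)))) (nhdsWithin 1 (Set.Iio 1)) atTop := by
    apply Tendsto.const_mul_atTop (by positivity)
    apply Filter.tendsto_atTop_add_const_left
    exact tendsto_neg_atBot_atTop.comp hlog
  apply tendsto_atTop_mono' _ _ hL
  filter_upwards [Ioo_mem_nhdsLT_of_mem (by constructor <;> norm_num : (1:ℝ) ∈ Set.Ioc 0 1)]
    with m hm
  exact K_lb hm

noncomputable def fF (m : ℝ) : ℝ := 2 * ellE m / (m * ellK m) + 1 - 2 / m

lemma f_eq {m : ℝ} (hm : m ∈ Ioo (0:ℝ) 1) : fF m = 1 - 2 * ellG m / ellK m := by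
  have hK := (ellK_pos hm.1.le hm.2).ne'
  have hm0 : m ≠ 0 := hm.1.ne'
  rw [fF, ellE_eq hm.1.le hm.2]
  field_simp
  ring

lemma f_eq' {m : ℝ} (hm : m ∈ Ioo (0:ℝ) 1) : fF m = -1 + 2 * ellH m / ellK m := by
  have hK := (ellK_pos hm.1.le hm.2).ne'
  rw [f_eq hm]
  have hGH : ellG m = ellK m - ellH m := by
    have := ellK_eq hm.1.le hm.2; linarith
  rw [hGH]
  field_simp
  ring

lemma f_anti : StrictAntiOn fF (Ioo (0:ℝ) 1) := by
  intro m₁ h1 m₂ h2 h12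
  rw [f_eq h1, f_eq h2]
  have hK1 := ellK_pos h1.1.le h1.2
  have hK2 := ellK_pos h2.1.le h2.2
  have := key_ineq h1.1 h12 h2.2
  have hdiv : 2 * ellG m₁ / ellK m₁ < 2 * ellG m₂ / ellK m₂ := by
    rw [div_lt_div_iff₀ hK1 hK2]
    nlinarith
  linarith

lemma f_contOn : ContinuousOn fF (Ioo (0:ℝ) 1) := by
  apply ContinuousOn.congr (f := fun m => 1 - 2 * ellG m / ellK m) _ (fun m hm => f_eq hm)
  have hsub : Ioo (0:ℝ) 1 ⊆ Ico 0 1 := Ioo_subset_Ico_self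
  apply ContinuousOn.sub continuousOn_const
  apply ContinuousOn.div ((continuousOn_const.mul (ellG_contOn.mono hsub)))
    (ellK_contOn.mono hsub)
  intro m hm
  exact (ellK_pos hm.1.le hm.2).ne'

lemma f_tendsto_zero : Tendsto fF (nhdsWithin 0 (Set.Ioi 0)) (nhds 0) := by
  have hmem : Set.Ioo (0:ℝ) 1 ∈ nhdsWithin 0 (Set.Ioi 0) :=
    Ioo_mem_nhdsGT_of_mem (by constructor <;> norm_num)
  have hg : Tendsto (fun m => 1 - 2 * ellG m / ellK m) (nhdsWithin 0 (Set.Ioi 0)) (nhds 0) := by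
    have hK0 : ellK 0 = π / 2 := by
      rw [ellK_eq le_rfl one_pos, ellG_zero, ellH_zero]; ring
    have hcont : ContinuousWithinAt (fun m => 1 - 2 * ellG m / ellK m) (Ico 0 1) 0 := by
      apply ContinuousWithinAt.sub continuousWithinAt_const
      apply ContinuousWithinAt.div
        (continuousWithinAt_const.mul (ellG_contOn 0 (by constructor <;> norm_num)))
        (ellK_contOn 0 (by constructor <;> norm_num))
      rw [hK0]; positivity
    have hval : 1 - 2 * ellG 0 / ellK 0 = 0 := by
      rw [ellG_zero, hK0]
      have := pi_pos
      field_simp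
      ring
    have htd := hcont.tendsto
    rw [hval] at htd
    exact htd.mono_left (nhdsWithin_le_of_mem
      (mem_of_superset hmem Ioo_subset_Ico_self))
  apply hg.congr'
  filter_upwards [hmem] with m hm
  exact (f_eq hm).symm

lemma f_tendsto_neg_one : Tendsto fF (nhdsWithin 1 (Set.Iio 1)) (nhds (-1)) := by
  have hmem : Set.Ioo (0:ℝ) 1 ∈ nhdsWithin 1 (Set.Iio 1) :=
    Ioo_mem_nhdsLT_of_mem (by constructor <;> norm_num)
  have hHK : Tendsto (fun m => 2 * ellH m / ellK m) (nhdsWithin 1 (Set.Iio 1)) (nhds 0) := by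
    apply tendsto_of_tendsto_of_tendsto_of_le_of_le' tendsto_const_nhds
      (Filter.Tendsto.const_div_atTop K_atTop 2)
    · filter_upwards [hmem] with m hm
      have := ellH_pos hm.1.le hm.2
      have := ellK_pos hm.1.le hm.2
      positivity
    · filter_upwards [hmem] with m hm
      have hK := ellK_pos hm.1.le hm.2
      have h1 : 2 * ellH m ≤ 2 := by linarith [ellH_le_one hm.1.le hm.2]
      exact (div_le_div_iff_of_pos_right hK).2 h1
  have hg : Tendsto (fun m => -1 + 2 * ellH m / ellK m) (nhdsWithin 1 (Set.Iio 1))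
      (nhds (-1)) := by
    have := hHK.const_add (-1)
    simpa using this
  apply hg.congr'
  filter_upwards [hmem] with m hm
  exact (f_eq' hm).symm

lemma f_neg {m : ℝ} (hm : m ∈ Ioo (0:ℝ) 1) : fF m < 0 := by
  have h2 : m / 2 ∈ Ioo (0:ℝ) 1 := ⟨by linarith [hm.1], by linarith [hm.2]⟩
  have hlt : fF m < fF (m / 2) := f_anti h2 hm (by linarith [hm.1])
  have hle : fF (m / 2) ≤ 0 := by
    apply ge_of_tendsto f_tendsto_zero
    filter_upwards [Ioo_mem_nhdsGT_of_mem (⟨le_refl (0:ℝ), by linarith [hm.1]⟩ :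
      (0:ℝ) ∈ Set.Ico 0 (m / 2))] with x hx
    exact (f_anti ⟨hx.1, by linarith [hx.2, hm.2]⟩ h2 hx.2).le
  linarith

lemma f_gt_neg_one {m : ℝ} (hm : m ∈ Ioo (0:ℝ) 1) : -1 < fF m := by
  have h2 : (1 + m) / 2 ∈ Ioo (0:ℝ) 1 := ⟨by linarith [hm.1], by linarith [hm.2]⟩
  have hlt : fF ((1 + m) / 2) < fF m := f_anti hm h2 (by linarith [hm.2])
  have hle : -1 ≤ fF ((1 + m) / 2) := by
    apply le_of_tendsto f_tendsto_neg_one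
    filter_upwards [Ioo_mem_nhdsLT_of_mem (⟨by linarith [hm.2], le_refl (1:ℝ)⟩ :
      (1:ℝ) ∈ Set.Ioc ((1 + m) / 2) 1)] with x hx
    exact (f_anti h2 ⟨by linarith [hx.1, hm.1], hx.2⟩ hx.1).le
  linarith

lemma f_surj : Set.SurjOn fF (Ioo (0:ℝ) 1) (Ioo (-1:ℝ) 0) := by
  intro y hy
  have ha : ∃ a, a ∈ Ioo (0:ℝ) 1 ∧ y < fF a := by
    have h1 := Filter.Tendsto.eventually_const_lt hy.2 f_tendsto_zero
    have h2 : Set.Ioo (0:ℝ) 1 ∈ nhdsWithin 0 (Set.Ioi 0) :=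
      Ioo_mem_nhdsGT_of_mem (by constructor <;> norm_num)
    exact ((Filter.eventually_mem_set.2 h2).and h1).exists
  have hb : ∃ b, b ∈ Ioo (0:ℝ) 1 ∧ fF b < y := by
    have h1 := Filter.Tendsto.eventually_lt_const hy.1 f_tendsto_neg_one
    have h2 : Set.Ioo (0:ℝ) 1 ∈ nhdsWithin 1 (Set.Iio 1) :=
      Ioo_mem_nhdsLT_of_mem (by constructor <;> norm_num)
    exact ((Filter.eventually_mem_set.2 h2).and h1).exists
  obtain ⟨a, ha1, ha2⟩ := ha
  obtain ⟨b, hb1, hb2⟩ := hb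
  have hab : a < b := by
    by_contra h
    push_neg at h
    rcases eq_or_lt_of_le h with h | h
    · rw [h] at hb2; linarith
    · have := f_anti hb1 ha1 h; linarith
  have hIcc : Set.Icc a b ⊆ Ioo (0:ℝ) 1 := fun x hx =>
    ⟨lt_of_lt_of_le ha1.1 hx.1, lt_of_le_of_lt hx.2 hb1.2⟩
  have := intermediate_value_Icc' hab.le (f_contOn.mono hIcc)
  obtain ⟨x, hx1, hx2⟩ := this ⟨hb2.le, ha2.le⟩
  exact ⟨x, hIcc hx1, hx2⟩

theorem f_strictAnti_bij :
    StrictAntiOn (fun m => 2 * ellE m / (m * ellK m) + 1 - 2 / m)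
      (Set.Ioo (0:ℝ) 1) ∧
    Set.BijOn (fun m => 2 * ellE m / (m * ellK m) + 1 - 2 / m)
      (Set.Ioo (0:ℝ) 1) (Set.Ioo (-1 : ℝ) 0) ∧
    Tendsto (fun m => 2 * ellE m / (m * ellK m) + 1 - 2 / m)
      (nhdsWithin 0 (Set.Ioi 0)) (nhds 0) ∧
    Tendsto (fun m => 2 * ellE m / (m * ellK m) + 1 - 2 / m)
      (nhdsWithin 1 (Set.Iio 1)) (nhds (-1)) := by
  refine ⟨f_anti, ⟨?_, f_anti.injOn, f_surj⟩, f_tendsto_zero, f_tendsto_neg_one⟩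
  intro m hm
  exact ⟨f_gt_neg_one hm, f_neg hm⟩
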